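/- arXiv:1312.5646 — 3 statements merged into one kernel-verified Lean document; each statement's English description precedes it below -/
import Mathlib

section
/- Let G be a finite graph with vertex set V and edge set E, and let v ∈ ℂ. Then Σ_{σ : V → {−1,1}} ∏_{{i,j} ∈ E} (1 + v σ_i σ_j) = 2^{|V|} Σ_S v^{|S|}, where the sum on the right runs over all even subgraphs S ⊆ E (including the empty set). -/
/-- The spin value of a site: `true ↦ +1`, `false ↦ -1`, as a complex number. -/
def spinC (b : Bool) : ℂ := if b then 1 else -1

/-- The product `σ_i σ_j` over the unordered pair (edge) `{i,j}`. -/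
def edgeSpinProdC {V : Type*} (σ : V → Bool) : Sym2 V → ℂ :=
  Sym2.lift ⟨fun i j => spinC (σ i) * spinC (σ j), fun i j => by ring⟩

/-- A finset `S` of edges is an even subgraph if every vertex is incident
to an even number of edges of `S`. -/
def IsEvenSubgraph {V : Type*} [DecidableEq V] (S : Finset (Sym2 V)) : Prop :=
  ∀ v : V, Even ((S.filter (fun e => v ∈ e)).card)

instance {V : Type*} [Fintype V] [DecidableEq V] (S : Finset (Sym2 V)) :
    Decidable (IsEvenSubgraph S) :=
  inferInstanceAs (Decidable (∀ v : V, Even ((S.filter (fun e => v ∈ e)).card)))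

lemma sum_spin_pow (d : ℕ) : ∑ b : Bool, (spinC b) ^ d = if Even d then 2 else 0 := by
  rw [Fintype.sum_bool]
  have h1 : spinC true = 1 := rfl
  have h2 : spinC false = -1 := rfl
  rw [h1, h2, one_pow]
  rcases Nat.even_or_odd d with h | h
  · rw [if_pos h, h.neg_one_pow]; norm_num
  · rw [if_neg (Nat.not_even_iff_odd.mpr h), h.neg_one_pow]; ring

lemma edge_prod {V : Type*} [Fintype V] [DecidableEq V] (σ : V → Bool) (e : Sym2 V)
    (he : ¬ e.IsDiag) :
    edgeSpinProdC σ e = ∏ w ∈ Finset.univ.filter (· ∈ e), spinC (σ w) := by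
  induction e using Sym2.inductionOn with
  | hf i j =>
    have hij : i ≠ j := by simpa [Sym2.isDiag_iff_proj_eq] using he
    have hfilter : Finset.univ.filter (· ∈ s(i, j)) = {i, j} := by
      ext w; simp [Sym2.mem_iff]
    rw [hfilter, Finset.prod_pair hij]
    rfl

/-- For a finite graph `G` with vertex set `V` and edge set `E`, and
`v ∈ ℂ`:  `Σ_{σ : V → {±1}} ∏_{{i,j} ∈ E} (1 + v σ_i σ_j) = 2^{|V|} Σ_S v^{|S|}`, where the
sum on the right runs over all even subgraphs `S ⊆ E` (including the empty set). -/
theorem sum_spin_high_temperature_expansion {V : Type*} [Fintype V] [DecidableEq V]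
    (G : SimpleGraph V) [DecidableRel G.Adj] (v : ℂ) :
    ∑ σ : V → Bool, ∏ e ∈ G.edgeFinset, (1 + v * edgeSpinProdC σ e) =
      (2 : ℂ) ^ (Fintype.card V) *
        ∑ S ∈ G.edgeFinset.powerset.filter (fun S => IsEvenSubgraph S), v ^ S.card := by
  classical
  have expand : ∀ σ : V → Bool, ∏ e ∈ G.edgeFinset, (1 + v * edgeSpinProdC σ e)
      = ∑ S ∈ G.edgeFinset.powerset, v ^ S.card * ∏ e ∈ S, edgeSpinProdC σ e := by
    intro σ
    simp_rw [add_comm (1 : ℂ)]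
    rw [Finset.prod_add]
    refine Finset.sum_congr rfl fun S _ => ?_
    rw [Finset.prod_const_one, mul_one, Finset.prod_mul_distrib, Finset.prod_const]
  rw [Finset.sum_congr rfl fun σ _ => expand σ, Finset.sum_comm]
  have inner : ∀ S ∈ G.edgeFinset.powerset,
      ∑ σ : V → Bool, ∏ e ∈ S, edgeSpinProdC σ e
        = if IsEvenSubgraph S then (2 : ℂ) ^ (Fintype.card V) else 0 := by
    intro S hS
    rw [Finset.mem_powerset] at hS
    have hstep : ∀ σ : V → Bool, ∏ e ∈ S, edgeSpinProdC σ e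
        = ∏ w : V, spinC (σ w) ^ ((S.filter (fun e => w ∈ e)).card) := by
      intro σ
      have h1 : ∀ e ∈ S, edgeSpinProdC σ e
          = ∏ w ∈ Finset.univ.filter (· ∈ e), spinC (σ w) := fun e he =>
        edge_prod σ e (SimpleGraph.not_isDiag_of_mem_edgeSet G
          (by simpa [SimpleGraph.mem_edgeFinset] using hS he))
      rw [Finset.prod_congr rfl h1]
      have h2 : ∀ (e : Sym2 V) (w : V),
          e ∈ S ∧ w ∈ Finset.univ.filter (· ∈ e) ↔
            e ∈ S.filter (fun e => w ∈ e) ∧ w ∈ (Finset.univ : Finset V) := by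
        intro e w; simp [and_comm]
      rw [Finset.prod_comm' h2]
      simp [Finset.prod_const]
    simp_rw [hstep]
    have hswap : ∑ σ : V → Bool, ∏ w : V, spinC (σ w) ^ ((S.filter (fun e => w ∈ e)).card)
        = ∏ w : V, ∑ b : Bool, spinC b ^ ((S.filter (fun e => w ∈ e)).card) := by
      rw [Finset.prod_univ_sum]
      rw [← Fintype.piFinset_univ]
    rw [hswap]
    simp_rw [sum_spin_pow]
    by_cases hE : IsEvenSubgraph S
    · rw [if_pos hE]
      rw [Finset.prod_congr rfl fun w _ => if_pos (hE w), Finset.prod_const,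
        Finset.card_univ]
    · rw [if_neg hE]
      obtain ⟨w, hw⟩ := not_forall.mp hE
      exact Finset.prod_eq_zero (Finset.mem_univ w) (if_neg hw)
  calc ∑ S ∈ G.edgeFinset.powerset, ∑ σ : V → Bool, v ^ S.card * ∏ e ∈ S, edgeSpinProdC σ e
      = ∑ S ∈ G.edgeFinset.powerset,
          v ^ S.card * (if IsEvenSubgraph S then (2 : ℂ) ^ (Fintype.card V) else 0) := by
        refine Finset.sum_congr rfl fun S hS => ?_
        rw [← Finset.mul_sum, inner S hS]
    _ = (2 : ℂ) ^ (Fintype.card V) *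
          ∑ S ∈ G.edgeFinset.powerset.filter (fun S => IsEvenSubgraph S), v ^ S.card := by
        rw [Finset.sum_filter, Finset.mul_sum]
        refine Finset.sum_congr rfl fun S _ => ?_
        by_cases h : IsEvenSubgraph S <;> simp [h, mul_comm]
end

section
/- Let G be a finite graph with vertex set V and edge set E, and let K ∈ ℝ. Then the Ising partition function satisfies Z(K) = 2^{|V|} (cosh K)^{|E|} Σ_S (tanh K)^{|S|}, where the sum runs over all even subgraphs S ⊆ E (including the empty set). -/
/-- The spin value of a site: `true ↦ +1`, `false ↦ -1`, as a real number. -/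
def spinR (b : Bool) : ℝ := if b then 1 else -1

/-- The product `σ_i σ_j` over the unordered pair (edge) `{i,j}`. -/
def edgeSpinProdR {V : Type*} (σ : V → Bool) : Sym2 V → ℝ :=
  Sym2.lift ⟨fun i j => spinR (σ i) * spinR (σ j), fun i j => by ring⟩

/-- The Ising partition function of a finite graph `G` at coupling `K`:
`Z(K) = Σ_{σ : V → {±1}} exp(K Σ_{{i,j} ∈ E} σ_i σ_j)`. -/
noncomputable def isingZ {V : Type*} [Fintype V] [DecidableEq V]
    (G : SimpleGraph V) [DecidableRel G.Adj] (K : ℝ) : ℝ :=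
  ∑ σ : V → Bool, Real.exp (K * ∑ e ∈ G.edgeFinset, edgeSpinProdR σ e)

lemma spinR_sum_pow (d : ℕ) :
    (∑ b : Bool, spinR b ^ d) = if Even d then 2 else 0 := by
  simp only [Fintype.sum_bool, spinR, if_true, if_false, Bool.cond_true]
  rcases Nat.even_or_odd d with h | h
  · simp [h, h.neg_one_pow]; norm_num
  · simp [h.neg_one_pow, Nat.not_even_iff_odd.mpr h]

lemma exp_mul_spin (K x : ℝ) (hx : x = 1 ∨ x = -1) :
    Real.exp (K * x) = Real.cosh K * (1 + Real.tanh K * x) := by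
  have hc := (Real.cosh_pos K).ne'
  rcases hx with rfl | rfl
  · rw [Real.tanh_eq_sinh_div_cosh]
    field_simp
    exact (Real.cosh_add_sinh K).symm
  · rw [Real.tanh_eq_sinh_div_cosh]
    field_simp
    nlinarith [Real.cosh_sub_sinh K]

lemma edgeSpinProdR_mem {V : Type*} (σ : V → Bool) (e : Sym2 V) :
    edgeSpinProdR σ e = 1 ∨ edgeSpinProdR σ e = -1 := by
  induction e using Sym2.inductionOn with
  | hf i j =>
    simp only [edgeSpinProdR, Sym2.lift_mk, spinR]
    rcases σ i <;> rcases σ j <;> simp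

lemma edgeSpinProdR_eq_prod {V : Type*} [Fintype V] [DecidableEq V]
    (σ : V → Bool) (e : Sym2 V) (he : ¬ e.IsDiag) :
    edgeSpinProdR σ e = ∏ v ∈ Finset.univ.filter (· ∈ e), spinR (σ v) := by
  induction e using Sym2.inductionOn with
  | hf i j =>
    have hij : i ≠ j := by simpa using he
    have h2 : Finset.univ.filter (· ∈ s(i,j)) = {i, j} := by
      ext v; simp [Sym2.mem_iff]
    rw [h2, Finset.prod_pair hij]
    simp [edgeSpinProdR]

lemma char_sum {V : Type*} [Fintype V] [DecidableEq V]
    (S : Finset (Sym2 V)) (hS : ∀ e ∈ S, ¬ e.IsDiag) :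
    (∑ σ : V → Bool, ∏ e ∈ S, edgeSpinProdR σ e) =
      if IsEvenSubgraph S then (2 : ℝ) ^ (Fintype.card V) else 0 := by
  have step1 : ∀ σ : V → Bool,
      (∏ e ∈ S, edgeSpinProdR σ e) =
        ∏ v : V, spinR (σ v) ^ ((S.filter (fun e => v ∈ e)).card) := by
    intro σ
    rw [Finset.prod_congr rfl (fun e he => edgeSpinProdR_eq_prod σ e (hS e he))]
    rw [Finset.prod_comm' (s' := fun v => S.filter (fun e => v ∈ e))
      (t' := Finset.univ) (by intro e v; simp)]
    exact Finset.prod_congr rfl fun v _ => Finset.prod_const _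
  simp only [step1]
  rw [← Fintype.piFinset_univ,
    ← Finset.prod_univ_sum (fun _ : V => (Finset.univ : Finset Bool))
      (fun v b => spinR b ^ ((S.filter (fun e => v ∈ e)).card))]
  simp only [spinR_sum_pow]
  by_cases h : IsEvenSubgraph S
  · rw [if_pos h]
    rw [Finset.prod_congr rfl (fun v _ => if_pos (h v)), Finset.prod_const,
      Finset.card_univ]
  · rw [if_neg h]
    obtain ⟨v, hv⟩ := not_forall.mp h
    exact Finset.prod_eq_zero (Finset.mem_univ v) (if_neg hv)

/-- For a finite graph `G` and `K ∈ ℝ`, the Ising partition function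
satisfies `Z(K) = 2^{|V|} (cosh K)^{|E|} Σ_S (tanh K)^{|S|}`, the sum running over all
even subgraphs `S ⊆ E` (including the empty set). -/
theorem isingZ_high_temperature_expansion {V : Type*} [Fintype V] [DecidableEq V]
    (G : SimpleGraph V) [DecidableRel G.Adj] (K : ℝ) :
    isingZ G K =
      (2 : ℝ) ^ (Fintype.card V) * (Real.cosh K) ^ (G.edgeFinset.card) *
        ∑ S ∈ G.edgeFinset.powerset.filter (fun S => IsEvenSubgraph S),
          (Real.tanh K) ^ S.card := by
  unfold isingZ
  have h1 : ∀ σ : V → Bool,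
      Real.exp (K * ∑ e ∈ G.edgeFinset, edgeSpinProdR σ e)
        = Real.cosh K ^ G.edgeFinset.card *
            ∏ e ∈ G.edgeFinset, (Real.tanh K * edgeSpinProdR σ e + 1) := by
    intro σ
    rw [Finset.mul_sum, Real.exp_sum,
      Finset.prod_congr rfl (fun e _ => exp_mul_spin K _ (edgeSpinProdR_mem σ e)),
      Finset.prod_mul_distrib, Finset.prod_const]
    congr 1
    exact Finset.prod_congr rfl fun e _ => by ring
  have h2 : ∀ σ : V → Bool,
      (∏ e ∈ G.edgeFinset, (Real.tanh K * edgeSpinProdR σ e + 1))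
        = ∑ S ∈ G.edgeFinset.powerset,
            Real.tanh K ^ S.card * ∏ e ∈ S, edgeSpinProdR σ e := by
    intro σ
    rw [Finset.prod_add]
    refine Finset.sum_congr rfl fun S hS => ?_
    rw [Finset.prod_const_one, mul_one, Finset.prod_mul_distrib, Finset.prod_const]
  simp only [h1, h2]
  simp only [Finset.mul_sum]
  rw [Finset.sum_comm]
  have h3 : ∀ S ∈ G.edgeFinset.powerset,
      (∑ σ : V → Bool, Real.cosh K ^ G.edgeFinset.card *
          (Real.tanh K ^ S.card * ∏ e ∈ S, edgeSpinProdR σ e))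
        = Real.cosh K ^ G.edgeFinset.card * Real.tanh K ^ S.card *
            (if IsEvenSubgraph S then (2 : ℝ) ^ (Fintype.card V) else 0) := by
    intro S hS
    have hdiag : ∀ e ∈ S, ¬ e.IsDiag := fun e he =>
      G.not_isDiag_of_mem_edgeSet
        (SimpleGraph.mem_edgeFinset.mp (Finset.mem_powerset.mp hS he))
    rw [← char_sum S hdiag, Finset.mul_sum]
    refine Finset.sum_congr rfl fun σ _ => by ring
  rw [Finset.sum_congr rfl h3, Finset.sum_filter]
  refine Finset.sum_congr rfl fun S _ => ?_
  split_ifs with h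
  · ring
  · simp
end

section
/- Let Γ be a finite directed graph with a linear order on the edges at each vertex and antisymmetric complex weights τ_{ee'} = −τ_{e'e} for pairs of distinct edges meeting at a vertex. For any simple loop ℓ of Γ, the amplitude A_ℓ(τ) computed from a cyclic traversal of ℓ equals the amplitude computed from the reversed traversal; i.e., A_ℓ(τ) = A_{ℓ^{−1}}(τ). -/
/-- A step of a walk in a directed graph: an edge together with a direction of traversal
(`true` = in agreement with the orientation, from source to target). -/
abbrev Step (E : Type*) := E × Bool

/-- The starting vertex of a step. -/
def stepStart {V E : Type*} (src tgt : E → V) (p : Step E) : V :=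
  if p.2 then src p.1 else tgt p.1

/-- The ending vertex of a step. -/
def stepEnd {V E : Type*} (src tgt : E → V) (p : Step E) : V :=
  if p.2 then tgt p.1 else src p.1

/-- The list of cyclically consecutive pairs of entries of a list. -/
def cyclicPairs {α : Type*} (l : List α) : List (α × α) := l.zip (l.rotate 1)

/-- A simple loop: a nonempty closed walk (the end of each step is the start of the
cyclically next step) using each edge at most once. -/
def IsSimpleLoop {V E : Type*} (src tgt : E → V) (ℓ : List (Step E)) : Prop :=
  ℓ ≠ [] ∧ (∀ q ∈ cyclicPairs ℓ, stepEnd src tgt q.1 = stepStart src tgt q.2) ∧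
    (ℓ.map Prod.fst).Nodup

/-- Two edges meet at a vertex. -/
def SharesVertex {V E : Type*} (src tgt : E → V) (e e' : E) : Prop :=
  src e = src e' ∨ src e = tgt e' ∨ tgt e = src e' ∨ tgt e = tgt e'

/-- The amplitude `A_ℓ(τ) = -(-1)^{|e|} ∏ τ_{e_i e_{i+1}}` of a cyclic traversal `ℓ`,
where `|e|` is the number of edges traversed in agreement with the orientation and the
product is over cyclically consecutive pairs of edges. -/
def loopAmp {E : Type*} (τ : E → E → ℂ) (ℓ : List (Step E)) : ℂ :=
  -(-1 : ℂ) ^ (ℓ.filter (fun p => p.2)).length *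
    ((cyclicPairs ℓ).map (fun q => τ q.1.1 q.2.1)).prod

/-- The reversed traversal: traverse the edges in the opposite cyclic order, each in the
opposite direction. -/
def reverseLoop {E : Type*} (ℓ : List (Step E)) : List (Step E) :=
  (ℓ.map (fun p => (p.1, !p.2))).reverse

lemma length_cyclicPairs {α : Type*} (l : List α) : (cyclicPairs l).length = l.length := by
  simp [cyclicPairs]

lemma cyclicPairs_map {α β : Type*} (g : α → β) (l : List α) :
    cyclicPairs (l.map g) = (cyclicPairs l).map (Prod.map g g) := by
  unfold cyclicPairs
  rw [← List.map_rotate, List.zip_map]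

lemma cyclicPairs_reverse {α : Type*} (l : List α) :
    cyclicPairs l.reverse = (((cyclicPairs l).map Prod.swap).reverse).rotate 1 := by
  apply List.ext_getElem
  · simp [length_cyclicPairs]
  · intro i h1 h2
    have hn : i < l.length := by simpa [cyclicPairs] using h1
    have hpos : 0 < l.length := Nat.pos_of_ne_zero (by omega)
    simp only [cyclicPairs, List.getElem_zip, List.getElem_rotate, List.getElem_reverse,
      List.getElem_map, List.length_reverse, List.length_map, List.length_zip,
      List.length_rotate, Prod.swap_prod_mk, min_self]
    rcases Nat.lt_or_ge (i + 1) l.length with h | h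
    · have e1 : (i + 1) % l.length = i + 1 := Nat.mod_eq_of_lt h
      have e2 : (l.length - 1 - (i + 1) + 1) % l.length = l.length - 1 - i := by
        rw [Nat.mod_eq_of_lt (by omega)]; omega
      simp only [e1, e2]
    · have hi1 : i + 1 = l.length := by omega
      have e1 : (i + 1) % l.length = 0 := by rw [hi1, Nat.mod_self]
      have e2 : (l.length - 1 - 0 + 1) % l.length = 0 := by
        rw [Nat.sub_zero, Nat.sub_add_cancel hpos, Nat.mod_self]
      have e3 : l.length - 1 - i = 0 := by omega
      simp only [e1, e2, e3]


/-- In a finite directed graph (with no self-loops) with antisymmetric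
complex weights `τ_{ee'} = -τ_{e'e}` on pairs of distinct edges meeting at a vertex, the
amplitude of a simple loop is invariant under reversal of the traversal:
`A_ℓ(τ) = A_{ℓ⁻¹}(τ)`. -/
theorem loopAmp_reverse {V E : Type*} [Fintype V] [Fintype E]
    (src tgt : E → V) (hsimple : ∀ e, src e ≠ tgt e)
    (τ : E → E → ℂ)
    (hanti : ∀ e e', e ≠ e' → SharesVertex src tgt e e' → τ e e' = -τ e' e)
    (ℓ : List (Step E)) (hℓ : IsSimpleLoop src tgt ℓ) :
    loopAmp τ ℓ = loopAmp τ (reverseLoop ℓ) := by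
  obtain ⟨hne0, hclosed, hnodup⟩ := hℓ
  set g : Step E → Step E := fun p => (p.1, !p.2) with hg
  -- every cyclically consecutive pair has distinct edges
  have hne : ∀ q ∈ cyclicPairs ℓ, q.1.1 ≠ q.2.1 := by
    intro q hq heq
    obtain ⟨i, hi, hqe⟩ := List.mem_iff_getElem.mp hq
    have hi' : i < ℓ.length := by simpa [length_cyclicPairs] using hi
    have hpos : 0 < ℓ.length := by omega
    have hmod : (i + 1) % ℓ.length < ℓ.length := Nat.mod_lt _ hpos
    have hq12 : q = (ℓ[i], ℓ[(i + 1) % ℓ.length]) := by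
      rw [← hqe]; simp [cyclicPairs, List.getElem_zip, List.getElem_rotate]
    have heq' : (ℓ.map Prod.fst)[i]'(by simpa using hi') =
        (ℓ.map Prod.fst)[(i + 1) % ℓ.length]'(by simpa using hmod) := by
      simp only [List.getElem_map]
      rw [hq12] at heq; exact heq
    have hieq : i = (i + 1) % ℓ.length := hnodup.getElem_inj_iff.mp heq'
    -- i = (i+1) % n forces n = 1, i = 0
    rcases Nat.lt_or_ge (i + 1) ℓ.length with h | h
    · rw [Nat.mod_eq_of_lt h] at hieq; omega
    · have hi1 : i + 1 = ℓ.length := by omega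
      have e1 : (i + 1) % ℓ.length = 0 := by rw [hi1, Nat.mod_self]
      have getc : ∀ (a b : ℕ) (ha : a < ℓ.length) (hb : b < ℓ.length), a = b →
          ℓ[a]'ha = ℓ[b]'hb := fun a b ha hb h => by subst h; rfl
      have hq2 : q.2 = q.1 := by
        rw [hq12]; exact getc _ _ hmod hi' hieq.symm
      have hcl := hclosed q hq
      rw [hq2] at hcl
      cases hb : (q.1).2 with
      | true => simp [stepEnd, stepStart, hb] at hcl; exact hsimple _ hcl.symm
      | false => simp [stepEnd, stepStart, hb] at hcl; exact hsimple _ hcl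
  -- every cyclically consecutive pair shares a vertex
  have hsv : ∀ q ∈ cyclicPairs ℓ, SharesVertex src tgt q.1.1 q.2.1 := by
    intro q hq
    have hcl := hclosed q hq
    unfold SharesVertex
    cases h1 : q.1.2 <;> cases h2 : q.2.2 <;>
      simp [stepEnd, stepStart, h1, h2] at hcl <;> tauto
  -- product transformation
  have hprod : ((cyclicPairs (reverseLoop ℓ)).map (fun q => τ q.1.1 q.2.1)).prod =
      (-1 : ℂ) ^ ℓ.length * ((cyclicPairs ℓ).map (fun q => τ q.1.1 q.2.1)).prod := by
    have h1 : cyclicPairs (reverseLoop ℓ) =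
        ((((cyclicPairs ℓ).map (Prod.map g g)).map Prod.swap).reverse).rotate 1 := by
      rw [reverseLoop, cyclicPairs_reverse, cyclicPairs_map]
    have hperm : List.Perm (cyclicPairs (reverseLoop ℓ))
        (((cyclicPairs ℓ).map (Prod.map g g)).map Prod.swap) := by
      rw [h1]
      exact (List.rotate_perm _ 1).trans (List.reverse_perm _)
    rw [(hperm.map (fun q => τ q.1.1 q.2.1)).prod_eq]
    rw [List.map_map, List.map_map]
    have h2 : ((cyclicPairs ℓ).map
        (((fun (q : Step E × Step E) => τ q.1.1 q.2.1) ∘ Prod.swap) ∘ Prod.map g g)) =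
        (cyclicPairs ℓ).map (fun q => -τ q.1.1 q.2.1) := by
      apply List.map_congr_left
      intro q hq
      simp only [Function.comp_apply, Prod.map_apply, Prod.swap_prod_mk, hg]
      exact hanti _ _ (Ne.symm (hne q hq)) (by
        have := hsv q hq; unfold SharesVertex at this ⊢; tauto)
    rw [h2]
    have h3 : (cyclicPairs ℓ).map (fun q => -τ q.1.1 q.2.1) =
        ((cyclicPairs ℓ).map (fun q => τ q.1.1 q.2.1)).map Neg.neg := by
      rw [List.map_map]; rfl
    rw [h3, List.prod_map_neg, List.length_map, length_cyclicPairs]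
  -- counting forward steps
  have hcount : ((reverseLoop ℓ).filter (fun p => p.2)).length =
      ℓ.length - (ℓ.filter (fun p => p.2)).length := by
    rw [reverseLoop, List.filter_reverse, List.length_reverse, List.filter_map,
      List.length_map]
    have : ((fun (p : Step E) => p.2) ∘ g) = fun p => !p.2 := rfl
    rw [this]
    have := ℓ.length_eq_length_filter_add (fun p => p.2)
    omega
  rw [loopAmp, loopAmp, hprod, hcount]
  have hk : (ℓ.filter (fun p => p.2)).length ≤ ℓ.length := List.length_filter_le _ _
  set k := (ℓ.filter (fun p => p.2)).length
  set n := ℓ.length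
  have hsign : (-1 : ℂ) ^ k = (-1) ^ (n - k) * (-1) ^ n := by
    rw [← pow_add, show n - k + n = k + 2 * (n - k) by omega, pow_add, pow_mul,
      neg_one_sq, one_pow, mul_one]
  rw [hsign]; ring
end
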